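/- arXiv:math/0608047 — 2 statements merged into one kernel-verified Lean document; each statement's English description precedes it below -/
import Mathlib

section
/- Let $\Theta$ be an $m\times m$ matrix with holomorphic entries near the origin in $\mathbb{C}^n$ of generic rank $m$. Then there exists an integer $\ell_0\geq 0$ and, for every integer $\ell\geq 0$, a polynomial map $q_\ell\colon\mathbb{C}^n\times J_0^{\ell_0+\ell}(\mathbb{C}^n,\mathbb{C}^m)\to\mathbb{C}^m$, homogeneous of degree $\ell$ in its first variable, such that for every germ of a holomorphic map $b\colon(\mathbb{C}^n,0)\to\mathbb{C}^m$: if $u\colon(\mathbb{C}^n,0)\to\mathbb{C}^m$ is a germ of a holomorphic map satisfying $\Theta(z)\cdot u(z)=b(z)$, then $u_\ell(z)=q_\ell(z, j_0^{\ell_0+\ell}b)$ for all $\ell\geq 0$, where $u_\ell$ is the homogeneous part of degree $\ell$ of $u$. -/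
noncomputable def homComp {n : ℕ} (m : ℕ) (F : MvPowerSeries (Fin n) ℂ) :
    MvPolynomial (Fin n) ℂ :=
  ∑ a ∈ Finset.Nat.antidiagonalTuple n m,
    MvPolynomial.monomial (Finsupp.equivFunOnFinite.symm a)
      (MvPowerSeries.coeff (R := ℂ) (Finsupp.equivFunOnFinite.symm a) F)

/-- A formal power series with geometrically bounded coefficients, i.e. a convergent one
(a germ of a holomorphic function). -/
def IsConvPS {n : ℕ} (F : MvPowerSeries (Fin n) ℂ) : Prop :=
  ∃ C : ℝ, 0 < C ∧ ∀ a : Fin n →₀ ℕ,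
    ‖MvPowerSeries.coeff (R := ℂ) a F‖ ≤ C ^ ((a.sum fun _ e => e) + 1)


section

open MvPowerSeries Finsupp

lemma degree_add' {σ : Type*} (a b : σ →₀ ℕ) : (a + b).degree = a.degree + b.degree := by
  simp [Finsupp.degree_eq_weight_one, map_add]

lemma keydiv {n : ℕ} (d F : MvPowerSeries (Fin n) ℂ) (hd : d ≠ 0) (N : ℕ)
    (h : ∀ e : Fin n →₀ ℕ, e.degree ≤ N → MvPowerSeries.coeff (R := ℂ) e (d * F) = 0) :
    ∀ a : Fin n →₀ ℕ, a.degree + d.order.toNat ≤ N → MvPowerSeries.coeff (R := ℂ) a F = 0 := by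
  intro a ha
  by_cases hF : F = 0
  · simp [hF]
  set μ := d.order.toNat with hμ
  set k := F.order.toNat with hk
  have hdo : (μ : ℕ∞) = d.order := ne_zero_iff_order_finite.mp hd
  have hFo : (k : ℕ∞) = F.order := ne_zero_iff_order_finite.mp hF
  set P := homogeneousComponent μ d with hP
  set Q := homogeneousComponent k F with hQ
  have hcoP : ∀ e : Fin n →₀ ℕ, MvPowerSeries.coeff (R := ℂ) e P =
      if e.degree = μ then MvPowerSeries.coeff (R := ℂ) e d else 0 := fun e =>
    coeff_homogeneousComponent μ e d
  have hcoQ : ∀ e : Fin n →₀ ℕ, MvPowerSeries.coeff (R := ℂ) e Q =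
      if e.degree = k then MvPowerSeries.coeff (R := ℂ) e F else 0 := fun e =>
    coeff_homogeneousComponent k e F
  have hPne : P ≠ 0 := by
    obtain ⟨e, he, hdeg⟩ := exists_coeff_ne_zero_and_order (f := d) (ne_zero_iff_order_finite.mp hd)
    have hde : e.degree = μ := by
      have : (e.degree : ℕ∞) = (μ : ℕ∞) := by rw [hdeg, hdo]
      exact_mod_cast this
    intro h0
    apply he
    have := hcoP e
    rw [h0, map_zero, if_pos hde] at this
    exact this.symm
  have hQne : Q ≠ 0 := by
    obtain ⟨e, he, hdeg⟩ := exists_coeff_ne_zero_and_order (f := F) (ne_zero_iff_order_finite.mp hF)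
    have hde : e.degree = k := by
      have : (e.degree : ℕ∞) = (k : ℕ∞) := by rw [hdeg, hFo]
      exact_mod_cast this
    intro h0
    apply he
    have := hcoQ e
    rw [h0, map_zero, if_pos hde] at this
    exact this.symm
  have hPQ : P * Q ≠ 0 := mul_ne_zero hPne hQne
  obtain ⟨e0, he0⟩ : ∃ e0 : Fin n →₀ ℕ, MvPowerSeries.coeff (R := ℂ) e0 (P * Q) ≠ 0 := by
    by_contra hc
    push_neg at hc
    exact hPQ (MvPowerSeries.ext fun e => by simpa using hc e)
  -- degree e0 = μ + k
  have hde0 : e0.degree = μ + k := by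
    rw [MvPowerSeries.coeff_mul] at he0
    obtain ⟨pq, hpq, hne⟩ := Finset.exists_ne_zero_of_sum_ne_zero he0
    have h1 : pq.1.degree = μ := by
      by_contra hcc
      rw [hcoP pq.1, if_neg hcc, zero_mul] at hne; exact hne rfl
    have h2 : pq.2.degree = k := by
      by_contra hcc
      rw [hcoQ pq.2, if_neg hcc, mul_zero] at hne; exact hne rfl
    have := Finset.HasAntidiagonal.mem_antidiagonal.mp hpq
    rw [← this, degree_add', h1, h2]
  -- coeff e0 (d * F) = coeff e0 (P * Q)
  have hcoeq : MvPowerSeries.coeff (R := ℂ) e0 (d * F) = MvPowerSeries.coeff (R := ℂ) e0 (P * Q) := by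
    rw [MvPowerSeries.coeff_mul, MvPowerSeries.coeff_mul]
    apply Finset.sum_congr rfl
    intro pq hpq
    have hsum : pq.1.degree + pq.2.degree = μ + k := by
      rw [← degree_add', Finset.HasAntidiagonal.mem_antidiagonal.mp hpq, hde0]
    rcases lt_trichotomy pq.1.degree μ with hlt | heq | hgt
    · have h1 : MvPowerSeries.coeff (R := ℂ) pq.1 d = 0 := by
        apply coeff_of_lt_order
        rw [← hdo]
        exact_mod_cast hlt
      rw [h1, hcoP pq.1, if_neg (by omega), zero_mul, zero_mul]
    · have h2 : pq.2.degree = k := by omega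
      rw [hcoP pq.1, if_pos heq, hcoQ pq.2, if_pos h2]
    · have h2 : pq.2.degree < k := by omega
      have hF2 : MvPowerSeries.coeff (R := ℂ) pq.2 F = 0 := by
        apply coeff_of_lt_order
        rw [← hFo]
        exact_mod_cast h2
      rw [hF2, hcoQ pq.2, if_neg (by omega), mul_zero, mul_zero]
  -- order (d * F) ≤ μ + k but order (d*F) ≥ N + 1, so N < μ + k
  have hne2 : MvPowerSeries.coeff (R := ℂ) e0 (d * F) ≠ 0 := by rw [hcoeq]; exact he0
  have hle : e0.degree ≤ N → False := fun hdN => hne2 (h e0 hdN)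
  have hNlt : N < μ + k := by
    rw [← hde0]; by_contra hc; exact hle (by omega)
  -- conclude
  apply coeff_of_lt_order
  rw [← hFo]
  exact_mod_cast (by omega : a.degree < k)

lemma degree_eq_sum_univ {n : ℕ} (a : Fin n →₀ ℕ) : a.degree = ∑ v, a v :=
  Finset.sum_subset (Finset.subset_univ _) fun _ _ hi => Finsupp.notMem_support_iff.mp hi

def Dset (n N : ℕ) : Finset (Fin n → ℕ) :=
  (Finset.range (N+1)).biUnion fun k => Finset.Nat.antidiagonalTuple n k

lemma mem_Dset {n N : ℕ} {a : Fin n → ℕ} : a ∈ Dset n N ↔ ∑ v, a v ≤ N := by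
  simp [Dset, Finset.Nat.mem_antidiagonalTuple, Nat.lt_succ_iff]

noncomputable def jetMap {n m : ℕ} (Θ : Matrix (Fin m) (Fin m) (MvPowerSeries (Fin n) ℂ))
    (N : ℕ) :
    (Fin m → MvPowerSeries (Fin n) ℂ) →ₗ[ℂ] ((↥(Dset n N) × Fin m) → ℂ) where
  toFun u x := MvPowerSeries.coeff (R := ℂ) (Finsupp.equivFunOnFinite.symm x.1.val)
    (∑ j, Θ x.2 j * u j)
  map_add' u v := by
    funext x
    simp [mul_add, Finset.sum_add_distrib]
  map_smul' c u := by
    funext x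
    simp [mul_smul_comm, ← Finset.smul_sum]

lemma coeff_mul_low_zero {n : ℕ} (A B : MvPowerSeries (Fin n) ℂ) (N : ℕ)
    (hB : ∀ e : Fin n →₀ ℕ, e.degree ≤ N → MvPowerSeries.coeff (R := ℂ) e B = 0) :
    ∀ e : Fin n →₀ ℕ, e.degree ≤ N → MvPowerSeries.coeff (R := ℂ) e (A * B) = 0 := by
  intro e he
  rw [MvPowerSeries.coeff_mul]
  apply Finset.sum_eq_zero
  intro pq hpq
  have : pq.2.degree ≤ N := by
    have h1 := Finset.HasAntidiagonal.mem_antidiagonal.mp hpq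
    have : pq.1.degree + pq.2.degree = e.degree := by rw [← degree_add', h1]
    omega
  rw [hB pq.2 this, mul_zero]

lemma ker_le {n m : ℕ} (Θ : Matrix (Fin m) (Fin m) (MvPowerSeries (Fin n) ℂ))
    (hdet : Θ.det ≠ 0) (N : ℕ) (a : Fin n →₀ ℕ) (i : Fin m)
    (ha : a.degree + Θ.det.order.toNat ≤ N) (u : Fin m → MvPowerSeries (Fin n) ℂ)
    (hu : jetMap Θ N u = 0) : MvPowerSeries.coeff (R := ℂ) a (u i) = 0 := by
  have hlow : ∀ (j : Fin m) (e : Fin n →₀ ℕ), e.degree ≤ N →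
      MvPowerSeries.coeff (R := ℂ) e (Θ.mulVec u j) = 0 := by
    intro j e he
    have hmem : (e : Fin n → ℕ) ∈ Dset n N := by
      rw [mem_Dset, ← degree_eq_sum_univ]; exact he
    have := congrFun hu (⟨(e : Fin n → ℕ), hmem⟩, j)
    simpa [jetMap, Matrix.mulVec, dotProduct] using this
  have hdu : Θ.det * u i = ∑ j, Θ.adjugate i j * (Θ.mulVec u) j := by
    have h1 : (Θ.adjugate * Θ).mulVec u = Θ.adjugate.mulVec (Θ.mulVec u) :=
      (Matrix.mulVec_mulVec u Θ.adjugate Θ).symm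
    rw [Matrix.adjugate_mul, Matrix.smul_mulVec, Matrix.one_mulVec] at h1
    have := congrFun h1 i
    simpa [Matrix.mulVec, dotProduct] using this
  apply keydiv Θ.det (u i) hdet N _ a ha
  intro e he
  rw [hdu]
  rw [map_sum]
  apply Finset.sum_eq_zero
  intro j _
  exact coeff_mul_low_zero _ _ N (hlow j) e he

lemma exists_lam {n m : ℕ} (Θ : Matrix (Fin m) (Fin m) (MvPowerSeries (Fin n) ℂ))
    (hdet : Θ.det ≠ 0) (N : ℕ) (a : Fin n →₀ ℕ) (i : Fin m)
    (ha : a.degree + Θ.det.order.toNat ≤ N) :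
    ∃ lam : ((↥(Dset n N) × Fin m) → ℂ) →ₗ[ℂ] ℂ,
      ∀ u : Fin m → MvPowerSeries (Fin n) ℂ,
        lam (jetMap Θ N u) = MvPowerSeries.coeff (R := ℂ) a (u i) := by
  set Ψ := jetMap Θ N with hΨ
  set φ : (Fin m → MvPowerSeries (Fin n) ℂ) →ₗ[ℂ] ℂ :=
    (MvPowerSeries.coeff (R := ℂ) a).comp (LinearMap.proj i) with hφ
  have hker : LinearMap.ker Ψ ≤ LinearMap.ker φ := by
    intro u hu
    exact ker_le Θ hdet N a i ha u (LinearMap.mem_ker.mp hu)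
  obtain ⟨lam, hlam⟩ := LinearMap.exists_extend
    (((LinearMap.ker Ψ).liftQ φ hker).comp (Ψ.quotKerEquivRange.symm :
      LinearMap.range Ψ →ₗ[ℂ] ((Fin m → MvPowerSeries (Fin n) ℂ) ⧸ LinearMap.ker Ψ)))
  refine ⟨lam, fun u => ?_⟩
  have h1 : Ψ u = (LinearMap.range Ψ).subtype ⟨Ψ u, LinearMap.mem_range_self Ψ u⟩ := rfl
  rw [h1, ← LinearMap.comp_apply, hlam, LinearMap.comp_apply]
  simp only [LinearEquiv.coe_coe]
  rw [LinearMap.quotKerEquivRange_symm_apply_image Ψ u]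
  simp [Submodule.mkQ_apply, Submodule.liftQ_apply, hφ]

end

/-- parametrization of solutions of the linear singular system
`Θ(z) ⋅ u(z) = b(z)`: each homogeneous part `u_ℓ` is given by a universal polynomial map,
homogeneous of degree `ℓ` in `z`, of the `(ℓ₀+ℓ)`-jet of `b` at the origin. -/
theorem stmt15 (n m : ℕ)
    (Θ : Matrix (Fin m) (Fin m) (MvPowerSeries (Fin n) ℂ))
    (hconv : ∀ i j, IsConvPS (Θ i j))
    (hdet : Θ.det ≠ 0) :
    ∃ ℓ0 : ℕ, ∃ q : ℕ → Fin m → MvPolynomial (Fin n ⊕ ((Fin n →₀ ℕ) × Fin m)) ℂ,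
      -- homogeneity of degree ℓ in the first variable z
      (∀ ℓ i, ∀ mo ∈ (q ℓ i).support, (∑ v : Fin n, mo (Sum.inl v)) = ℓ) ∧
      -- q ℓ depends only on the (ℓ0+ℓ)-jet of b
      (∀ ℓ i, ∀ v ∈ (q ℓ i).vars, ∀ jx : (Fin n →₀ ℕ) × Fin m, v = Sum.inr jx →
        (jx.1.sum fun _ e => e) ≤ ℓ0 + ℓ) ∧
      ∀ (b u : Fin m → MvPowerSeries (Fin n) ℂ),
        (∀ i, IsConvPS (b i)) → (∀ i, IsConvPS (u i)) →
        (∀ i, ∑ j, Θ i j * u j = b i) →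
        ∀ ℓ : ℕ, ∀ i, ∀ z : Fin n → ℂ,
          MvPolynomial.eval z (homComp ℓ (u i)) =
            MvPolynomial.eval
              (Sum.elim z fun jx => MvPowerSeries.coeff (R := ℂ) jx.1 (b jx.2)) (q ℓ i) := by
  classical
  set ℓ0 := Θ.det.order.toNat with hℓ0
  have H : ∀ (ℓ : ℕ) (p : {a : Fin n → ℕ // a ∈ Finset.Nat.antidiagonalTuple n ℓ}) (i : Fin m),
      ∃ lam : ((↥(Dset n (ℓ0 + ℓ)) × Fin m) → ℂ) →ₗ[ℂ] ℂ,
        ∀ u : Fin m → MvPowerSeries (Fin n) ℂ,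
          lam (jetMap Θ (ℓ0 + ℓ) u) =
            MvPowerSeries.coeff (R := ℂ) (Finsupp.equivFunOnFinite.symm p.1) (u i) := by
    intro ℓ p i
    apply exists_lam Θ hdet
    have hp := Finset.Nat.mem_antidiagonalTuple.mp p.2
    rw [degree_eq_sum_univ]
    simp only [Finsupp.equivFunOnFinite_symm_apply_apply]
    omega
  choose lam hlam using H
  refine ⟨ℓ0, fun ℓ i =>
    ∑ p ∈ (Finset.Nat.antidiagonalTuple n ℓ).attach,
      ∑ x : (↥(Dset n (ℓ0 + ℓ)) × Fin m),
        MvPolynomial.monomial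
          ((Finsupp.equivFunOnFinite.symm p.1).mapDomain Sum.inl +
            Finsupp.single (Sum.inr (Finsupp.equivFunOnFinite.symm x.1.1, x.2)) 1)
          (lam ℓ p i ((fun y => if x = y then (1:ℂ) else 0))), ?_, ?_, ?_⟩
  · -- homogeneity
    intro ℓ i mo hmo
    have h1 := MvPolynomial.support_sum hmo
    rw [Finset.mem_biUnion] at h1
    obtain ⟨p, hp, h2⟩ := h1
    have h3 := MvPolynomial.support_sum h2
    rw [Finset.mem_biUnion] at h3
    obtain ⟨x, hx, h4⟩ := h3
    rw [MvPolynomial.support_monomial] at h4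
    by_cases hz : lam ℓ p i ((fun y => if x = y then (1:ℂ) else 0)) = 0
    · rw [if_pos hz] at h4; exact absurd h4 (Finset.notMem_empty mo)
    rw [if_neg hz, Finset.mem_singleton] at h4
    subst h4
    have hp2 := Finset.Nat.mem_antidiagonalTuple.mp p.2
    refine Eq.trans (Finset.sum_congr rfl ?_) hp2
    intro v _
    rw [Finsupp.add_apply, Finsupp.mapDomain_apply Sum.inl_injective,
      Finsupp.single_apply, if_neg (by simp)]
    simp
  · -- vars
    intro ℓ i v hv jx hjx
    rw [MvPolynomial.mem_vars] at hv
    obtain ⟨mo, hmo, hvmo⟩ := hv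
    have h1 := MvPolynomial.support_sum hmo
    rw [Finset.mem_biUnion] at h1
    obtain ⟨p, hp, h2⟩ := h1
    have h3 := MvPolynomial.support_sum h2
    rw [Finset.mem_biUnion] at h3
    obtain ⟨x, hx, h4⟩ := h3
    rw [MvPolynomial.support_monomial] at h4
    by_cases hz : lam ℓ p i ((fun y => if x = y then (1:ℂ) else 0)) = 0
    · rw [if_pos hz] at h4; exact absurd h4 (Finset.notMem_empty mo)
    rw [if_neg hz, Finset.mem_singleton] at h4
    subst h4 hjx
    have h6 := Finsupp.support_add hvmo
    rw [Finset.mem_union] at h6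
    rcases h6 with h6 | h6
    · exfalso
      have := Finsupp.mapDomain_support h6
      rw [Finset.mem_image] at this
      obtain ⟨w, _, hw⟩ := this
      exact Sum.inl_ne_inr hw
    · rw [Finsupp.support_single_ne_zero _ one_ne_zero, Finset.mem_singleton] at h6
      injection h6 with h6
      rw [h6]
      have hmem := x.1.2
      rw [mem_Dset] at hmem
      show ((Finsupp.equivFunOnFinite.symm x.1.1, x.2).1.sum fun _ e => e) ≤ ℓ0 + ℓ
      have : ((Finsupp.equivFunOnFinite.symm x.1.1).sum fun _ e => e) =
          (Finsupp.equivFunOnFinite.symm x.1.1).degree := rfl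
      rw [this, degree_eq_sum_univ]
      simpa using hmem
  · -- evaluation
    intro b u hbconv huconv hsys ℓ i z
    set N := ℓ0 + ℓ with hN
    set g : (Fin n ⊕ ((Fin n →₀ ℕ) × Fin m)) → ℂ :=
      Sum.elim z fun jx => MvPowerSeries.coeff (R := ℂ) jx.1 (b jx.2) with hg
    set jet : (↥(Dset n N) × Fin m) → ℂ :=
      fun x => MvPowerSeries.coeff (R := ℂ) (Finsupp.equivFunOnFinite.symm x.1.1) (b x.2) with hjet
    have hjeteq : jet = jetMap Θ N u := by
      funext x
      simp only [hjet, jetMap, LinearMap.coe_mk, AddHom.coe_mk, hsys x.2]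
    -- RHS computation
    rw [map_sum]
    have hterm : ∀ p ∈ (Finset.Nat.antidiagonalTuple n ℓ).attach,
        MvPolynomial.eval g (∑ x : (↥(Dset n N) × Fin m),
          MvPolynomial.monomial
            ((Finsupp.equivFunOnFinite.symm p.1).mapDomain Sum.inl +
              Finsupp.single (Sum.inr (Finsupp.equivFunOnFinite.symm x.1.1, x.2)) 1)
            (lam ℓ p i ((fun y => if x = y then (1:ℂ) else 0)))) =
        MvPowerSeries.coeff (R := ℂ) (Finsupp.equivFunOnFinite.symm p.1) (u i) *
          ((Finsupp.equivFunOnFinite.symm p.1).prod fun v e => z v ^ e) := by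
      intro p _
      rw [map_sum]
      have hx : ∀ x : (↥(Dset n N) × Fin m),
          MvPolynomial.eval g (MvPolynomial.monomial
            ((Finsupp.equivFunOnFinite.symm p.1).mapDomain Sum.inl +
              Finsupp.single (Sum.inr (Finsupp.equivFunOnFinite.symm x.1.1, x.2)) 1)
            (lam ℓ p i ((fun y => if x = y then (1:ℂ) else 0)))) =
          (lam ℓ p i ((fun y => if x = y then (1:ℂ) else 0)) * jet x) *
            ((Finsupp.equivFunOnFinite.symm p.1).prod fun v e => z v ^ e) := by
        intro x
        rw [MvPolynomial.eval_monomial]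
        rw [Finsupp.prod_add_index' (fun a => pow_zero _) (fun a b c => pow_add _ _ _)]
        rw [Finsupp.prod_mapDomain_index_inj Sum.inl_injective]
        rw [Finsupp.prod_single_index (h := fun s e => g s ^ e) (pow_zero _)]
        have h1 : (Finsupp.equivFunOnFinite.symm p.1).prod (fun a b => g (Sum.inl a) ^ b) =
            (Finsupp.equivFunOnFinite.symm p.1).prod fun v e => z v ^ e := rfl
        have h2 : g (Sum.inr (Finsupp.equivFunOnFinite.symm x.1.1, x.2)) ^ 1 = jet x := by
          rw [pow_one]; rfl
        rw [h1, h2]; ring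
      rw [Finset.sum_congr rfl fun x _ => hx x, ← Finset.sum_mul]
      congr 1
      have hsum : ∑ x : (↥(Dset n N) × Fin m), lam ℓ p i ((fun y => if x = y then (1:ℂ) else 0)) * jet x =
          lam ℓ p i jet := by
        conv_rhs => rw [pi_eq_sum_univ jet]
        rw [map_sum]
        apply Finset.sum_congr rfl
        intro x _
        rw [map_smul, smul_eq_mul, mul_comm]
      rw [hsum, hjeteq, hlam ℓ p i u]
    rw [Finset.sum_congr rfl hterm,
      Finset.sum_attach (Finset.Nat.antidiagonalTuple n ℓ)
        (fun a => MvPowerSeries.coeff (R := ℂ) (Finsupp.equivFunOnFinite.symm a) (u i) *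
          ((Finsupp.equivFunOnFinite.symm a).prod fun v e => z v ^ e)),
      homComp, map_sum]
    apply Finset.sum_congr rfl
    intro a _
    rw [MvPolynomial.eval_monomial]
end

section
/- Let $A\colon(\mathbb{C}^n,0)\to(\mathbb{C}^n,0)$ be a germ of a holomorphic map of generic rank $n$ whose lowest-order homogeneous terms all have the same degree $\ell_0+1$ and form a map $A_0$ with $\det A_0'\not\equiv 0$. Define $\tilde p_1(z)=z$ and recursively $\tilde p_\ell(z,j_0^{\ell_0+\ell}b) = B_\ell\big(b_{\ell_0+\ell}(z) - A(P^{\ell-1}(z))|_{\ell_0+\ell}\big)$ where $P^{\ell-1}=\sum_{k<\ell}\tilde p_k$ and $B_\ell$ is a left inverse to multiplication by $A_0'$ on homogeneous polynomial maps. Then for any germ of a holomorphic map $b$ and any germ of a biholomorphism $u$ tangent to the identity (i.e. $u'(0)=\mathrm{id}$) with $A(u(z))=b(z)$, one has $u_\ell = \tilde p_\ell(\cdot, j_0^{\ell_0+\ell}b)$ for every $\ell\geq 1$. -/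
noncomputable def psComp {n N : ℕ} (F : MvPowerSeries (Fin n) ℂ)
    (g : Fin n → MvPowerSeries (Fin N) ℂ) : MvPowerSeries (Fin N) ℂ :=
  fun a => ∑ d ∈ Finset.range ((a.sum fun _ e => e) + 1),
    MvPowerSeries.coeff (R := ℂ) a (MvPolynomial.aeval g (homComp d F))

/-- A polynomial viewed as a formal power series. -/
noncomputable def polyPS {n : ℕ} (p : MvPolynomial (Fin n) ℂ) : MvPowerSeries (Fin n) ℂ :=
  MvPolynomial.aeval (fun i => (MvPowerSeries.X i : MvPowerSeries (Fin n) ℂ)) p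

open MvPowerSeries Finset

namespace S17

variable {n : ℕ}

local notation "R" => MvPowerSeries (Fin n) ℂ

/-- total degree of a multi-index -/
def dgF {n : ℕ} (a : Fin n →₀ ℕ) : ℕ := a.sum fun _ e => e

lemma dgF_eq_sum (a : Fin n →₀ ℕ) : dgF a = ∑ i, a i :=
  Finsupp.sum_fintype _ _ (fun _ => rfl)

lemma dgF_add (a b : Fin n →₀ ℕ) : dgF (a + b) = dgF a + dgF b := by
  simp [dgF_eq_sum, Finset.sum_add_distrib]

lemma dgF_single (j : Fin n) (k : ℕ) : dgF (Finsupp.single j k) = k := by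
  simp [dgF, Finsupp.sum_single_index]

lemma dgF_zero : dgF (0 : Fin n →₀ ℕ) = 0 := by simp [dgF]

lemma dgF_eq_zero {a : Fin n →₀ ℕ} (h : dgF a = 0) : a = 0 := by
  rw [dgF_eq_sum] at h
  ext i
  exact Finset.sum_eq_zero_iff.mp h i (Finset.mem_univ i)

lemma exists_single_of_dgF_one {c : Fin n →₀ ℕ} (h : dgF c = 1) :
    ∃ j, c = Finsupp.single j 1 := by
  rw [dgF_eq_sum] at h
  obtain ⟨j, _, hj⟩ := Finset.exists_ne_zero_of_sum_ne_zero (by rw [h]; exact one_ne_zero)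
  have h2 : c j + ∑ i ∈ Finset.univ.erase j, c i = 1 := by
    rw [Finset.add_sum_erase _ _ (Finset.mem_univ j), h]
  have hcj : c j = 1 := by omega
  have hz : ∑ i ∈ Finset.univ.erase j, c i = 0 := by omega
  refine ⟨j, Finsupp.ext fun i => ?_⟩
  by_cases hij : i = j
  · subst hij; simp [hcj]
  · rw [Finsupp.single_apply, if_neg (Ne.symm hij)]
    exact Finset.sum_eq_zero_iff.mp hz i (Finset.mem_erase.mpr ⟨hij, Finset.mem_univ i⟩)

/-- order ≥ k : all coefficients below total degree `k` vanish -/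
def OO {n : ℕ} (k : ℕ) (f : MvPowerSeries (Fin n) ℂ) : Prop :=
  ∀ a : Fin n →₀ ℕ, dgF a < k → MvPowerSeries.coeff a f = 0

/-- homogeneous of degree k (as a power series) -/
def HH {n : ℕ} (k : ℕ) (f : MvPowerSeries (Fin n) ℂ) : Prop :=
  ∀ a : Fin n →₀ ℕ, dgF a ≠ k → MvPowerSeries.coeff a f = 0

/-- coefficients agree below total degree k -/
def DD {n : ℕ} (k : ℕ) (f g : MvPowerSeries (Fin n) ℂ) : Prop := OO k (f - g)

lemma OO_zero (k : ℕ) : OO k (0 : R) := fun _ _ => map_zero _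

lemma OO_zero' (f : R) : OO 0 f := fun _ h => absurd h (Nat.not_lt_zero _)

lemma OO_mono {k' k : ℕ} (h : k' ≤ k) {f : R} (hf : OO k f) : OO k' f :=
  fun a ha => hf a (lt_of_lt_of_le ha h)

lemma OO_add {k : ℕ} {f g : R} (hf : OO k f) (hg : OO k g) : OO k (f + g) :=
  fun a ha => by rw [map_add, hf a ha, hg a ha, add_zero]

lemma OO_neg {k : ℕ} {f : R} (hf : OO k f) : OO k (-f) :=
  fun a ha => by rw [map_neg, hf a ha, neg_zero]

lemma OO_sub {k : ℕ} {f g : R} (hf : OO k f) (hg : OO k g) : OO k (f - g) := by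
  rw [sub_eq_add_neg]; exact OO_add hf (OO_neg hg)

lemma OO_sum {k : ℕ} {ι : Type*} {s : Finset ι} {f : ι → R}
    (h : ∀ i ∈ s, OO k (f i)) : OO k (∑ i ∈ s, f i) := by
  classical
  induction s using Finset.induction_on with
  | empty => simpa using OO_zero k
  | insert _ _ hne ih =>
    rw [Finset.sum_insert hne]
    exact OO_add (h _ (Finset.mem_insert_self _ _))
      (ih fun i hi => h i (Finset.mem_insert_of_mem hi))

lemma OO_mul {k l : ℕ} {f g : R} (hf : OO k f) (hg : OO l g) : OO (k + l) (f * g) := by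
  classical
  intro a ha
  rw [MvPowerSeries.coeff_mul]
  apply Finset.sum_eq_zero
  rintro ⟨b, c⟩ hbc
  rw [Finset.HasAntidiagonal.mem_antidiagonal] at hbc
  have hd : dgF b + dgF c < k + l := by rw [← dgF_add, hbc]; exact ha
  rcases lt_or_ge (dgF b) k with hb | hb
  · rw [hf b hb, zero_mul]
  · rw [hg c (by omega), mul_zero]

lemma OO_pow {k : ℕ} {f : R} (hf : OO k f) (e : ℕ) : OO (e * k) (f ^ e) := by
  induction e with
  | zero => simpa using OO_zero' (1 : R)
  | succ e ih =>
    have := OO_mul hf ih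
    rw [pow_succ]
    apply OO_mono (le_of_eq (by ring)) (OO_mul ih hf)

lemma OO_prod {ι : Type*} {s : Finset ι} {o : ι → ℕ} {f : ι → R}
    (h : ∀ i ∈ s, OO (o i) (f i)) : OO (∑ i ∈ s, o i) (∏ i ∈ s, f i) := by
  classical
  induction s using Finset.induction_on with
  | empty => simpa using OO_zero' (1 : R)
  | insert _ _ hne ih =>
    rename_i a s
    rw [Finset.prod_insert hne, Finset.sum_insert hne]
    exact OO_mul (h _ (Finset.mem_insert_self _ _))
      (ih fun i hi => h i (Finset.mem_insert_of_mem hi))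

lemma HH_mul {k l : ℕ} {f g : R} (hf : HH k f) (hg : HH l g) : HH (k + l) (f * g) := by
  classical
  intro a ha
  rw [MvPowerSeries.coeff_mul]
  apply Finset.sum_eq_zero
  rintro ⟨b, c⟩ hbc
  rw [Finset.HasAntidiagonal.mem_antidiagonal] at hbc
  have hd : dgF b + dgF c ≠ k + l := by rw [← dgF_add, hbc]; exact ha
  rcases eq_or_ne (dgF b) k with hb | hb
  · rw [hg c (by omega), mul_zero]
  · rw [hf b hb, zero_mul]

lemma HH_add {k : ℕ} {f g : R} (hf : HH k f) (hg : HH k g) : HH k (f + g) :=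
  fun a ha => by rw [map_add, hf a ha, hg a ha, add_zero]

lemma HH_zero (k : ℕ) : HH k (0 : R) := fun _ _ => map_zero _

lemma HH_sum {k : ℕ} {ι : Type*} {s : Finset ι} {f : ι → R}
    (h : ∀ i ∈ s, HH k (f i)) : HH k (∑ i ∈ s, f i) := by
  classical
  induction s using Finset.induction_on with
  | empty => simpa using HH_zero k
  | insert _ _ hne ih =>
    rw [Finset.sum_insert hne]
    exact HH_add (h _ (Finset.mem_insert_self _ _))
      (ih fun i hi => h i (Finset.mem_insert_of_mem hi))

lemma HH_X (j : Fin n) : HH 1 (MvPowerSeries.X j : R) := by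
  classical
  intro a ha
  rw [MvPowerSeries.coeff_X, if_neg]
  intro h
  apply ha; rw [h, dgF_single]

lemma HH_C (x : ℂ) : HH 0 ((MvPowerSeries.C : ℂ →+* R) x) := by
  intro a ha
  rw [MvPowerSeries.coeff_C, if_neg]
  intro h
  apply ha; rw [h, dgF_zero]

lemma HH_pow {k : ℕ} {f : R} (hf : HH k f) (e : ℕ) : HH (e * k) (f ^ e) := by
  induction e with
  | zero =>
    intro a ha
    rw [pow_zero]
    rw [show (1 : R) = (MvPowerSeries.C : ℂ →+* R) 1 by simp]
    exact HH_C 1 a (by simpa using ha)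
  | succ e ih =>
    rw [pow_succ, show (e + 1) * k = e * k + k by ring]
    exact HH_mul ih hf

lemma OO_of_HH {k : ℕ} {f : R} (hf : HH k f) : OO k f := fun a ha => hf a (by omega)

lemma OO_X (j : Fin n) : OO 1 (MvPowerSeries.X j : R) := OO_of_HH (HH_X j)

lemma OO_natCast_mul {k : ℕ} {f : R} (e : ℕ) (hf : OO k f) : OO k (((e : ℕ) : R) * f) := by
  have := OO_mul (OO_zero' ((e : ℕ) : R)) hf
  simpa using this

lemma DD_refl (k : ℕ) (f : R) : DD k f f := by
  unfold DD; rw [sub_self]; exact OO_zero k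

lemma DD_mono {k' k : ℕ} (h : k' ≤ k) {f g : R} (hd : DD k f g) : DD k' f g :=
  OO_mono h hd

lemma DD_of_eq {k : ℕ} {f g : R} (h : f = g) : DD k f g := h ▸ DD_refl k f

lemma DD_trans {k : ℕ} {f g h : R} (h1 : DD k f g) (h2 : DD k g h) : DD k f h := by
  unfold DD at *
  have := OO_add h1 h2
  simpa using this

lemma DD_coeff {k : ℕ} {f g : R} (h : DD k f g) {a : Fin n →₀ ℕ} (ha : dgF a < k) :
    MvPowerSeries.coeff a f = MvPowerSeries.coeff a g := by
  have := h a ha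
  rwa [map_sub, sub_eq_zero] at this

lemma DD_add {k : ℕ} {f f' g g' : R} (h1 : DD k f f') (h2 : DD k g g') :
    DD k (f + g) (f' + g') := by
  unfold DD at *
  have := OO_add h1 h2
  have heq : f - f' + (g - g') = f + g - (f' + g') := by ring
  rwa [heq] at this

lemma DD_sum {k : ℕ} {ι : Type*} {s : Finset ι} {f g : ι → R}
    (h : ∀ i ∈ s, DD k (f i) (g i)) : DD k (∑ i ∈ s, f i) (∑ i ∈ s, g i) := by
  classical
  induction s using Finset.induction_on with
  | empty => simpa using DD_refl k 0
  | insert _ _ hne ih =>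
    rw [Finset.sum_insert hne, Finset.sum_insert hne]
    exact DD_add (h _ (Finset.mem_insert_self _ _))
      (ih fun i hi => h i (Finset.mem_insert_of_mem hi))

lemma DD_mul {k1 k2 o1 o2 : ℕ} {x x' y y' : R} (h1 : DD k1 x x') (h2 : DD k2 y y')
    (hx' : OO o1 x') (hy : OO o2 y) : DD (min (k1 + o2) (o1 + k2)) (x * y) (x' * y') := by
  unfold DD at *
  have heq : x * y - x' * y' = (x - x') * y + x' * (y - y') := by ring
  rw [heq]
  exact OO_add (OO_mono (min_le_left _ _) (OO_mul h1 hy))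
    (OO_mono (min_le_right _ _) (OO_mul hx' h2))

lemma DD_powSwap {o δ : ℕ} {x y : R} (hx : OO o x) (hy : OO o y) (h : DD (o + δ) x y) :
    ∀ e, DD (e * o + δ) (x ^ e) (y ^ e) := by
  intro e
  induction e with
  | zero => simpa using DD_refl δ 1
  | succ e ih =>
    have hm := DD_mul h ih hy (OO_pow hx e)
    rw [show min (o + δ + e * o) (o + (e * o + δ)) = (e + 1) * o + δ by
      rw [show o + δ + e * o = o + (e * o + δ) by ring, min_self]; ring] at hm
    rw [pow_succ, pow_succ]
    exact DD_mono (le_of_eq rfl) (by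
      have : x ^ e * x = x * x ^ e := by ring
      rw [this, show y ^ e * y = y * y ^ e by ring]
      exact hm)

lemma DD_prodSwap {δ : ℕ} {o : Fin n → ℕ} {x y : Fin n → R}
    (hx : ∀ i, OO (o i) (x i)) (hy : ∀ i, OO (o i) (y i))
    (h : ∀ i, DD (o i + δ) (x i) (y i)) (s : Finset (Fin n)) :
    DD ((∑ i ∈ s, o i) + δ) (∏ i ∈ s, x i) (∏ i ∈ s, y i) := by
  classical
  induction s using Finset.induction_on with
  | empty => simpa using DD_refl δ 1
  | insert _ _ hne ih =>
    rename_i a s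
    rw [Finset.prod_insert hne, Finset.prod_insert hne, Finset.sum_insert hne]
    have hm := DD_mul (h a) ih (hy a) (OO_prod fun i _ => hx i)
    rwa [show min (o a + δ + ∑ i ∈ s, o i) (o a + ((∑ i ∈ s, o i) + δ))
        = o a + (∑ i ∈ s, o i) + δ by omega] at hm

lemma OO_corr {ℓ : ℕ} {g r : R} (hg : OO 1 g) (hr : OO ℓ r) (e : ℕ) :
    OO ((e - 1) + ℓ) (((e : ℕ) : R) * (g ^ (e - 1) * r)) := by
  apply OO_natCast_mul
  have := OO_mul (OO_pow hg (e - 1)) hr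
  simpa using this

lemma powA {ℓ : ℕ} (hl : 2 ≤ ℓ) {f g : R} (hf : OO 1 f) (hg : OO 1 g)
    (hfg : OO ℓ (f - g)) :
    ∀ e, DD (e + 2 * ℓ - 2) (f ^ e) (g ^ e + ((e : ℕ) : R) * (g ^ (e - 1) * (f - g))) := by
  intro e
  induction e with
  | zero => apply DD_of_eq; simp
  | succ e ih =>
    -- Step 1: f^(e+1) ≈ f * (g^e + e g^(e-1) (f-g)) below level e+1+2ℓ-2
    have hfe : OO e (f ^ e) := by have := OO_pow hf e; simpa using this
    have hx' : OO e (g ^ e + ((e : ℕ) : R) * (g ^ (e - 1) * (f - g))) := by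
      apply OO_add
      · have := OO_pow hg e; simpa using this
      · exact OO_mono (by omega) (OO_corr hg hfg e)
    have h1 := DD_mul (DD_refl (e + 2 * ℓ) f) ih hf hfe
    have h1' : DD (e + 1 + 2 * ℓ - 2) (f ^ (e + 1))
        (f * (g ^ e + ((e : ℕ) : R) * (g ^ (e - 1) * (f - g)))) := by
      rw [pow_succ, show f ^ e * f = f * f ^ e by ring]
      exact DD_mono (by omega) h1
    refine DD_trans h1' ?_
    -- Step 2
    rcases e with _ | d
    · apply DD_of_eq
      push_cast
      simp only [pow_zero, pow_one, Nat.zero_sub, Nat.add_sub_cancel, zero_mul, mul_zero,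
        add_zero, zero_add, one_mul, mul_one]
      ring
    · unfold DD
      simp only [Nat.add_sub_cancel]
      have hdiff : f * (g ^ (d + 1) + ((d + 1 : ℕ) : R) * (g ^ d * (f - g)))
          - (g ^ (d + 1 + 1) + ((d + 1 + 1 : ℕ) : R) * (g ^ (d + 1) * (f - g)))
          = ((d + 1 : ℕ) : R) * (g ^ d * ((f - g) * (f - g))) := by
        push_cast
        ring
      rw [hdiff]
      apply OO_mono (show d + 1 + 1 + 2 * ℓ - 2 ≤ 0 + (d * 1 + (ℓ + ℓ)) by omega)
      exact OO_mul (OO_zero' _) (OO_mul (by simpa using OO_pow hg d) (OO_mul hfg hfg))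

lemma prodB {ℓ : ℕ} (hl : 2 ≤ ℓ) (f g : Fin n → R)
    (hf : ∀ j, OO 1 (f j)) (hg : ∀ j, OO 1 (g j)) (hfg : ∀ j, OO ℓ (f j - g j))
    (e : Fin n → ℕ) (s : Finset (Fin n)) :
    DD ((∑ j ∈ s, e j) + 2 * ℓ - 2) (∏ j ∈ s, (f j) ^ (e j))
      ((∏ j ∈ s, (g j) ^ (e j)) +
        ∑ j ∈ s, (∏ i ∈ s.erase j, (g i) ^ (e i)) *
          (((e j : ℕ) : R) * ((g j) ^ (e j - 1) * (f j - g j)))) := by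
  classical
  induction s using Finset.induction_on with
  | empty => apply DD_of_eq; simp
  | insert _ _ hne ih =>
    rename_i a s
    have hOOfp : ∀ (t : Finset (Fin n)), OO (∑ j ∈ t, e j) (∏ j ∈ t, (f j) ^ (e j)) := by
      intro t
      apply OO_prod; intro i _; have := OO_pow (hf i) (e i); simpa using this
    have hOOgp : ∀ (t : Finset (Fin n)), OO (∑ j ∈ t, e j) (∏ j ∈ t, (g j) ^ (e j)) := by
      intro t
      apply OO_prod; intro i _; have := OO_pow (hg i) (e i); simpa using this
    -- correction sums order bound
    have hOOcorr : ∀ j, OO ((e j - 1) + ℓ)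
        (((e j : ℕ) : R) * ((g j) ^ (e j - 1) * (f j - g j))) :=
      fun j => OO_corr (hg j) (hfg j) (e j)
    have hCorrS : OO ((∑ j ∈ s, e j) + ℓ - 1)
        (∑ j ∈ s, (∏ i ∈ s.erase j, (g i) ^ (e i)) *
          (((e j : ℕ) : R) * ((g j) ^ (e j - 1) * (f j - g j)))) := by
      apply OO_sum
      intro j hj
      have hsum : (∑ i ∈ s.erase j, e i) + e j = ∑ i ∈ s, e i :=
        Finset.sum_erase_add _ _ hj
      exact OO_mono (by omega) (OO_mul (hOOgp _) (hOOcorr j))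
    have hx' : OO (e a) ((g a) ^ (e a) +
        ((e a : ℕ) : R) * ((g a) ^ (e a - 1) * (f a - g a))) := by
      apply OO_add
      · have := OO_pow (hg a) (e a); simpa using this
      · exact OO_mono (by omega) (hOOcorr a)
    have h1 := DD_mul (powA hl (hf a) (hg a) (hfg a) (e a)) ih hx' (hOOfp s)
    rw [Finset.prod_insert hne, Finset.prod_insert hne, Finset.sum_insert hne]
    have h1' : DD ((e a + ∑ j ∈ s, e j) + 2 * ℓ - 2)
        ((f a) ^ (e a) * ∏ j ∈ s, (f j) ^ (e j))
        (((g a) ^ (e a) + ((e a : ℕ) : R) * ((g a) ^ (e a - 1) * (f a - g a))) *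
          ((∏ j ∈ s, (g j) ^ (e j)) +
            ∑ j ∈ s, (∏ i ∈ s.erase j, (g i) ^ (e i)) *
              (((e j : ℕ) : R) * ((g j) ^ (e j - 1) * (f j - g j))))) :=
      DD_mono (by omega) h1
    refine DD_trans h1' ?_
    -- rewrite the target correction sum
    have hTgt : (∑ j ∈ insert a s, (∏ i ∈ (insert a s).erase j, (g i) ^ (e i)) *
          (((e j : ℕ) : R) * ((g j) ^ (e j - 1) * (f j - g j))))
        = (∏ i ∈ s, (g i) ^ (e i)) *
            (((e a : ℕ) : R) * ((g a) ^ (e a - 1) * (f a - g a))) +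
          (g a) ^ (e a) * ∑ j ∈ s, (∏ i ∈ s.erase j, (g i) ^ (e i)) *
            (((e j : ℕ) : R) * ((g j) ^ (e j - 1) * (f j - g j))) := by
      rw [Finset.sum_insert hne, Finset.erase_insert hne]
      congr 1
      rw [Finset.mul_sum]
      apply Finset.sum_congr rfl
      intro j hj
      have hja : a ≠ j := fun h => hne (h ▸ hj)
      rw [Finset.erase_insert_of_ne hja, Finset.prod_insert
        (fun h => hne (Finset.mem_of_mem_erase h))]
      ring
    rw [hTgt]
    unfold DD
    have hdiff : ((g a) ^ (e a) + ((e a : ℕ) : R) * ((g a) ^ (e a - 1) * (f a - g a))) *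
          ((∏ j ∈ s, (g j) ^ (e j)) +
            ∑ j ∈ s, (∏ i ∈ s.erase j, (g i) ^ (e i)) *
              (((e j : ℕ) : R) * ((g j) ^ (e j - 1) * (f j - g j))))
        - ((g a) ^ (e a) * ∏ j ∈ s, (g j) ^ (e j) +
            ((∏ i ∈ s, (g i) ^ (e i)) *
              (((e a : ℕ) : R) * ((g a) ^ (e a - 1) * (f a - g a))) +
             (g a) ^ (e a) * ∑ j ∈ s, (∏ i ∈ s.erase j, (g i) ^ (e i)) *
              (((e j : ℕ) : R) * ((g j) ^ (e j - 1) * (f j - g j)))))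
        = (((e a : ℕ) : R) * ((g a) ^ (e a - 1) * (f a - g a))) *
            (∑ j ∈ s, (∏ i ∈ s.erase j, (g i) ^ (e i)) *
              (((e j : ℕ) : R) * ((g j) ^ (e j - 1) * (f j - g j)))) := by
      ring
    rw [hdiff]
    exact OO_mono (by omega) (OO_mul (hOOcorr a) hCorrS)

lemma coeff_homComp (m : ℕ) (F : MvPowerSeries (Fin n) ℂ) (c : Fin n →₀ ℕ) :
    MvPolynomial.coeff c (homComp m F) =
      if dgF c = m then MvPowerSeries.coeff c F else 0 := by
  classical
  unfold homComp
  rw [MvPolynomial.coeff_sum]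
  simp only [MvPolynomial.coeff_monomial]
  by_cases h : dgF c = m
  · rw [if_pos h, Finset.sum_eq_single (Finsupp.equivFunOnFinite c)]
    · simp
    · intro b _ hbne
      rw [if_neg]
      intro heq
      apply hbne
      rw [← heq]; simp
    · intro habs
      exfalso
      apply habs
      rw [Finset.Nat.mem_antidiagonalTuple]
      show (∑ i, Finsupp.equivFunOnFinite c i) = m
      rw [← h, dgF_eq_sum]; rfl
  · rw [if_neg h]
    apply Finset.sum_eq_zero
    intro b hb
    rw [if_neg]
    intro heq
    apply h
    rw [← heq, dgF_eq_sum]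
    rw [Finset.Nat.mem_antidiagonalTuple] at hb
    rw [← hb]; rfl

lemma polyPS_eq_coe (p : MvPolynomial (Fin n) ℂ) : polyPS p = ↑p := by
  induction p using MvPolynomial.induction_on with
  | C a => simp [polyPS, MvPowerSeries.algebraMap_apply]
  | add p q hp hq => simp only [polyPS, map_add] at *; rw [hp, hq, MvPolynomial.coe_add]
  | mul_X p i hp => simp only [polyPS, map_mul] at *; rw [hp, MvPolynomial.coe_mul,
      MvPolynomial.aeval_X, MvPolynomial.coe_X]

lemma polyPS_coeff (p : MvPolynomial (Fin n) ℂ) (c : Fin n →₀ ℕ) :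
    MvPowerSeries.coeff c (polyPS p) = MvPolynomial.coeff c p := by
  rw [polyPS_eq_coe, MvPolynomial.coeff_coe]

lemma homComp_isHomogeneous (m : ℕ) (F : MvPowerSeries (Fin n) ℂ) :
    (homComp m F).IsHomogeneous m := by
  intro d hd
  rw [coeff_homComp] at hd
  by_cases h : dgF d = m
  · have hw : (Finsupp.weight 1) d = dgF d := by
      rw [Finsupp.weight_apply, dgF]
      apply Finsupp.sum_congr
      intros; simp
    rw [hw]; exact h
  · exact absurd (if_neg h) hd

lemma coeff_psComp {N : ℕ} (F : MvPowerSeries (Fin n) ℂ)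
    (g : Fin n → MvPowerSeries (Fin N) ℂ) (c : Fin N →₀ ℕ) :
    MvPowerSeries.coeff c (psComp F g) =
      ∑ d ∈ Finset.range (dgF c + 1),
        MvPowerSeries.coeff c (MvPolynomial.aeval g (homComp d F)) := rfl

lemma prod_X_sub_single (m : Fin n →₀ ℕ) (j : Fin n) :
    (∏ i, (MvPowerSeries.X i : R) ^ (((m - Finsupp.single j 1 : Fin n →₀ ℕ) i)))
      = (∏ i ∈ Finset.univ.erase j, (MvPowerSeries.X i : R) ^ (m i)) *
          (MvPowerSeries.X j : R) ^ (m j - 1) := by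
  classical
  rw [← Finset.prod_erase_mul Finset.univ _ (Finset.mem_univ j)]
  congr 1
  · apply Finset.prod_congr rfl
    intro i hi
    congr 1
    rw [Finsupp.tsub_apply, Finsupp.single_apply,
      if_neg (fun h => (Finset.mem_erase.mp hi).1 h.symm), Nat.sub_zero]
  · congr 1
    rw [Finsupp.tsub_apply, Finsupp.single_eq_same]

lemma keyMono {ℓ0 ℓ : ℕ} (hl : 2 ≤ ℓ) (u g UL : Fin n → MvPowerSeries (Fin n) ℂ)
    (hu : ∀ j, OO 1 (u j)) (hg : ∀ j, OO 1 (g j)) (hr : ∀ j, OO ℓ (u j - g j))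
    (hgX : ∀ j, DD 2 (g j) (MvPowerSeries.X j)) (hUL : ∀ j, HH ℓ (UL j))
    (hrU : ∀ j, DD (ℓ + 1) (u j - g j) (UL j))
    (m : Fin n →₀ ℕ) (hm : ℓ0 + 1 ≤ dgF m) :
    DD (ℓ0 + ℓ + 1) (∏ j, (u j) ^ (m j))
      ((∏ j, (g j) ^ (m j)) +
        ∑ j, ((m j : ℕ) : R) *
          ((∏ i, (MvPowerSeries.X i : R) ^ (((m - Finsupp.single j 1 : Fin n →₀ ℕ) i))) * UL j)) := by
  classical
  have hXp : ∀ (i : Fin n) (k : ℕ), OO k ((MvPowerSeries.X i : R) ^ k) :=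
    fun i k => by simpa using OO_pow (OO_X i) k
  have hgp : ∀ (i : Fin n) (k : ℕ), OO k ((g i) ^ k) :=
    fun i k => by simpa using OO_pow (hg i) k
  have hULO : ∀ j, OO ℓ (UL j) := fun j => OO_of_HH (hUL j)
  -- the swap of each correction term
  have swap : ∀ j, DD (ℓ0 + ℓ + 1)
      ((∏ i ∈ Finset.univ.erase j, (g i) ^ (m i)) *
        (((m j : ℕ) : R) * ((g j) ^ (m j - 1) * (u j - g j))))
      (((m j : ℕ) : R) *
        ((∏ i, (MvPowerSeries.X i : R) ^ (((m - Finsupp.single j 1 : Fin n →₀ ℕ) i))) * UL j)) := by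
    intro j
    by_cases hmj : m j = 0
    · apply DD_of_eq; simp [hmj]
    · rw [prod_X_sub_single]
      have hsum : (∑ i ∈ Finset.univ.erase j, m i) + m j = dgF m := by
        rw [dgF_eq_sum]; exact Finset.sum_erase_add _ _ (Finset.mem_univ j)
      have hA : DD ((∑ i ∈ Finset.univ.erase j, m i) + 1)
          (∏ i ∈ Finset.univ.erase j, (g i) ^ (m i))
          (∏ i ∈ Finset.univ.erase j, (MvPowerSeries.X i : R) ^ (m i)) := by
        have := DD_prodSwap (o := fun i => m i) (δ := 1)
          (x := fun i => (g i) ^ (m i)) (y := fun i => (MvPowerSeries.X i : R) ^ (m i))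
          (fun i => hgp i (m i)) (fun i => hXp i (m i))
          (fun i => by simpa using DD_powSwap (hg i) (OO_X i) (hgX i) (m i))
          (Finset.univ.erase j)
        exact this
      have hB : DD ((m j - 1) + 1) ((g j) ^ (m j - 1))
          ((MvPowerSeries.X j : R) ^ (m j - 1)) := by
        simpa using DD_powSwap (hg j) (OO_X j) (hgX j) (m j - 1)
      have c1 := DD_mul hB (hrU j) (hXp j (m j - 1)) (hr j)
      rw [show min ((m j - 1) + 1 + ℓ) ((m j - 1) + (ℓ + 1)) = (m j - 1) + ℓ + 1 by
        omega] at c1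
      have c2 := DD_mul (DD_refl 1 (((m j : ℕ) : R))) c1 (OO_zero' _)
        (OO_mul (hgp j (m j - 1)) (hr j))
      rw [show min (1 + ((m j - 1) + ℓ)) (0 + ((m j - 1) + ℓ + 1)) = (m j - 1) + ℓ + 1 by
        omega] at c2
      have c3 := DD_mul hA c2
        (OO_prod (fun i _ => hXp i (m i)))
        (OO_natCast_mul _ (OO_mul (hgp j (m j - 1)) (hr j)))
      rw [show min ((∑ i ∈ Finset.univ.erase j, m i) + 1 + ((m j - 1) + ℓ))
          ((∑ i ∈ Finset.univ.erase j, m i) + ((m j - 1) + ℓ + 1))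
          = (∑ i ∈ Finset.univ.erase j, m i) + (m j - 1) + ℓ + 1 by omega] at c3
      have c3' := DD_mono (show ℓ0 + ℓ + 1 ≤
          (∑ i ∈ Finset.univ.erase j, m i) + (m j - 1) + ℓ + 1 by omega) c3
      refine DD_trans (DD_of_eq ?_) (DD_trans c3' (DD_of_eq ?_))
      · ring
      · ring
  have hprod := prodB hl u g hu hg hr (fun j => m j) Finset.univ
  have hlev : ℓ0 + ℓ + 1 ≤ (∑ j, m j) + 2 * ℓ - 2 := by
    have : (∑ j, m j) = dgF m := (dgF_eq_sum m).symm
    omega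
  refine DD_trans (DD_mono hlev hprod) ?_
  exact DD_add (DD_refl _ _) (DD_sum fun j _ => swap j)

lemma HH_prod {ι : Type*} {s : Finset ι} {o : ι → ℕ} {f : ι → R}
    (h : ∀ i ∈ s, HH (o i) (f i)) : HH (∑ i ∈ s, o i) (∏ i ∈ s, f i) := by
  classical
  induction s using Finset.induction_on with
  | empty =>
    intro a ha
    simp only [Finset.prod_empty]
    rw [show (1 : R) = (MvPowerSeries.C : ℂ →+* R) 1 by simp]
    exact HH_C 1 a (by simpa using ha)
  | insert _ _ hne ih =>
    rw [Finset.prod_insert hne, Finset.sum_insert hne]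
    exact HH_mul (h _ (Finset.mem_insert_self _ _))
      (ih fun i hi => h i (Finset.mem_insert_of_mem hi))

lemma HH_natCast (e : ℕ) : HH 0 (((e : ℕ) : R)) := by
  rw [← map_natCast ((MvPowerSeries.C : ℂ →+* R)) e]
  exact HH_C _

lemma dgF_sub_single {m : Fin n →₀ ℕ} {j : Fin n} (hmj : m j ≠ 0) :
    dgF (m - Finsupp.single j 1) = dgF m - 1 := by
  classical
  have key : (m - Finsupp.single j 1) + Finsupp.single j 1 = m := by
    ext i
    rw [Finsupp.add_apply, Finsupp.tsub_apply, Finsupp.single_apply]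
    by_cases h : j = i
    · subst h; simp; omega
    · simp only [if_neg h]; omega
  have := congrArg dgF key
  rw [dgF_add, dgF_single] at this
  omega

lemma polyPS_monomial (b : Fin n →₀ ℕ) (x : ℂ) :
    polyPS (MvPolynomial.monomial b x) =
      (MvPowerSeries.C : ℂ →+* R) x * ∏ i, (MvPowerSeries.X i : R) ^ (b i) := by
  unfold polyPS
  rw [MvPolynomial.aeval_monomial, Finsupp.prod_pow]
  have hC : (algebraMap ℂ (MvPowerSeries (Fin n) ℂ)) x = (MvPowerSeries.C : ℂ →+* R) x := by
    simp [MvPowerSeries.algebraMap_apply]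
  rw [hC]

lemma aeval_monomial_eq (h : Fin n → R) (m : Fin n →₀ ℕ) (cm : ℂ) :
    MvPolynomial.aeval h (MvPolynomial.monomial m cm) =
      (MvPowerSeries.C : ℂ →+* R) cm * ∏ i, (h i) ^ (m i) := by
  rw [MvPolynomial.aeval_monomial, Finsupp.prod_pow]
  have hC : (algebraMap ℂ (MvPowerSeries (Fin n) ℂ)) cm = (MvPowerSeries.C : ℂ →+* R) cm := by
    simp [MvPowerSeries.algebraMap_apply]
  rw [hC]

lemma pderivTerm (m : Fin n →₀ ℕ) (cm : ℂ) (Pl : Fin n → MvPolynomial (Fin n) ℂ) :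
    polyPS (∑ j, MvPolynomial.pderiv j (MvPolynomial.monomial m cm) * Pl j)
      = (MvPowerSeries.C : ℂ →+* R) cm *
          ∑ j, ((m j : ℕ) : R) *
            ((∏ i, (MvPowerSeries.X i : R) ^ ((m - Finsupp.single j 1 : Fin n →₀ ℕ) i)) *
              polyPS (Pl j)) := by
  unfold polyPS
  rw [map_sum, Finset.mul_sum]
  apply Finset.sum_congr rfl
  intro j _
  rw [MvPolynomial.pderiv_monomial, map_mul]
  have := polyPS_monomial (m - Finsupp.single j 1) (cm * (m j : ℂ))
  unfold polyPS at this
  rw [this]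
  rw [map_mul ((MvPowerSeries.C : ℂ →+* R)), map_natCast ((MvPowerSeries.C : ℂ →+* R))]
  ring

lemma keyMonoCoeff {ℓ0 ℓ : ℕ} (hl : 2 ≤ ℓ) (u g : Fin n → R)
    (Pl : Fin n → MvPolynomial (Fin n) ℂ)
    (hu : ∀ j, OO 1 (u j)) (hg : ∀ j, OO 1 (g j)) (hr : ∀ j, OO ℓ (u j - g j))
    (hgX : ∀ j, DD 2 (g j) (MvPowerSeries.X j)) (hUL : ∀ j, HH ℓ (polyPS (Pl j)))
    (hrU : ∀ j, DD (ℓ + 1) (u j - g j) (polyPS (Pl j)))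
    (m : Fin n →₀ ℕ) (hm : ℓ0 + 1 ≤ dgF m) (cm : ℂ)
    {c : Fin n →₀ ℕ} (hc : dgF c = ℓ0 + ℓ) :
    MvPowerSeries.coeff c (MvPolynomial.aeval u (MvPolynomial.monomial m cm)) =
      MvPowerSeries.coeff c (MvPolynomial.aeval g (MvPolynomial.monomial m cm)) +
      MvPowerSeries.coeff c
        (polyPS (∑ j, MvPolynomial.pderiv j (MvPolynomial.monomial m cm) * Pl j)) := by
  rw [aeval_monomial_eq, aeval_monomial_eq, pderivTerm,
    MvPowerSeries.coeff_C_mul, MvPowerSeries.coeff_C_mul, MvPowerSeries.coeff_C_mul]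
  have hkey := keyMono hl u g (fun j => polyPS (Pl j)) hu hg hr hgX hUL hrU m hm
  have hco := DD_coeff hkey (a := c) (by omega)
  rw [map_add] at hco
  rw [hco]
  ring

lemma vanishTerm {ℓ : ℕ} (Pl : Fin n → MvPolynomial (Fin n) ℂ)
    (hUL : ∀ j, HH ℓ (polyPS (Pl j)))
    (m : Fin n →₀ ℕ) (hm1 : 1 ≤ dgF m) (cm : ℂ)
    {c : Fin n →₀ ℕ} (hc : dgF c ≠ dgF m - 1 + ℓ) :
    MvPowerSeries.coeff c
      (polyPS (∑ j, MvPolynomial.pderiv j (MvPolynomial.monomial m cm) * Pl j)) = 0 := by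
  classical
  rw [pderivTerm, MvPowerSeries.coeff_C_mul]
  rw [show (MvPowerSeries.coeff c) (∑ j, ((m j : ℕ) : R) *
      ((∏ i, (MvPowerSeries.X i : R) ^ ((m - Finsupp.single j 1 : Fin n →₀ ℕ) i)) *
        polyPS (Pl j))) = 0 from ?_]
  · ring
  · rw [map_sum]
    apply Finset.sum_eq_zero
    intro j _
    by_cases hmj : m j = 0
    · simp [hmj]
    · have hX : HH (dgF (m - Finsupp.single j 1))
          (∏ i, (MvPowerSeries.X i : R) ^ ((m - Finsupp.single j 1 : Fin n →₀ ℕ) i)) := by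
        rw [dgF_eq_sum]
        apply HH_prod
        intro i _
        simpa only [mul_one] using HH_pow (HH_X i) ((m - Finsupp.single j 1 : Fin n →₀ ℕ) i)
      have hterm : HH (0 + (dgF (m - Finsupp.single j 1) + ℓ))
          (((m j : ℕ) : R) *
            ((∏ i, (MvPowerSeries.X i : R) ^ ((m - Finsupp.single j 1 : Fin n →₀ ℕ) i)) *
              polyPS (Pl j))) :=
        HH_mul (HH_natCast _) (HH_mul hX (hUL j))
      apply hterm
      rw [dgF_sub_single hmj]
      omega

lemma vanishPoly {ℓ : ℕ} (Pl : Fin n → MvPolynomial (Fin n) ℂ)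
    (hUL : ∀ j, HH ℓ (polyPS (Pl j)))
    (p : MvPolynomial (Fin n) ℂ) (c : Fin n →₀ ℕ)
    (hp : ∀ m ∈ p.support, 1 ≤ dgF m ∧ dgF c ≠ dgF m - 1 + ℓ) :
    MvPowerSeries.coeff c (polyPS (∑ j, MvPolynomial.pderiv j p * Pl j)) = 0 := by
  classical
  have hps : ∑ j, MvPolynomial.pderiv j p * Pl j
      = ∑ v ∈ p.support, ∑ j, MvPolynomial.pderiv j
          (MvPolynomial.monomial v (MvPolynomial.coeff v p)) * Pl j := by
    rw [Finset.sum_comm]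
    apply Finset.sum_congr rfl
    intro j _
    rw [← Finset.sum_mul, ← map_sum, ← MvPolynomial.as_sum]
  have hpoly : polyPS (∑ v ∈ p.support, ∑ j, MvPolynomial.pderiv j
        (MvPolynomial.monomial v (MvPolynomial.coeff v p)) * Pl j)
      = ∑ v ∈ p.support, polyPS (∑ j, MvPolynomial.pderiv j
          (MvPolynomial.monomial v (MvPolynomial.coeff v p)) * Pl j) := by
    unfold polyPS
    rw [map_sum]
  rw [hps, hpoly, map_sum]
  apply Finset.sum_eq_zero
  intro v hv
  exact vanishTerm Pl hUL v (hp v hv).1 _ (hp v hv).2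

lemma keyPoly {ℓ0 ℓ : ℕ} (hl : 2 ≤ ℓ) (u g : Fin n → R)
    (Pl : Fin n → MvPolynomial (Fin n) ℂ)
    (hu : ∀ j, OO 1 (u j)) (hg : ∀ j, OO 1 (g j)) (hr : ∀ j, OO ℓ (u j - g j))
    (hgX : ∀ j, DD 2 (g j) (MvPowerSeries.X j)) (hUL : ∀ j, HH ℓ (polyPS (Pl j)))
    (hrU : ∀ j, DD (ℓ + 1) (u j - g j) (polyPS (Pl j)))
    (p : MvPolynomial (Fin n) ℂ) (hp : ∀ m ∈ p.support, ℓ0 + 1 ≤ dgF m)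
    {c : Fin n →₀ ℕ} (hc : dgF c = ℓ0 + ℓ) :
    MvPowerSeries.coeff c (MvPolynomial.aeval u p) =
      MvPowerSeries.coeff c (MvPolynomial.aeval g p) +
      MvPowerSeries.coeff c (polyPS (∑ j, MvPolynomial.pderiv j p * Pl j)) := by
  classical
  have hps : ∑ j, MvPolynomial.pderiv j p * Pl j
      = ∑ v ∈ p.support, ∑ j, MvPolynomial.pderiv j
          (MvPolynomial.monomial v (MvPolynomial.coeff v p)) * Pl j := by
    rw [Finset.sum_comm]
    apply Finset.sum_congr rfl
    intro j _
    rw [← Finset.sum_mul, ← map_sum, ← MvPolynomial.as_sum]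
  have hev : ∀ (h' : Fin n → R), MvPolynomial.aeval h' p
      = ∑ v ∈ p.support, MvPolynomial.aeval h'
          (MvPolynomial.monomial v (MvPolynomial.coeff v p)) := by
    intro h'
    conv_lhs => rw [MvPolynomial.as_sum p]
    rw [map_sum]
  have hpoly : polyPS (∑ v ∈ p.support, ∑ j, MvPolynomial.pderiv j
        (MvPolynomial.monomial v (MvPolynomial.coeff v p)) * Pl j)
      = ∑ v ∈ p.support, polyPS (∑ j, MvPolynomial.pderiv j
          (MvPolynomial.monomial v (MvPolynomial.coeff v p)) * Pl j) := by
    unfold polyPS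
    rw [map_sum]
  rw [hps, hev u, hev g, hpoly, map_sum, map_sum, map_sum, ← Finset.sum_add_distrib]
  apply Finset.sum_congr rfl
  intro v hv
  exact keyMonoCoeff hl u g Pl hu hg hr hgX hUL hrU v (hp v hv) _ hc

end S17

open S17

/-- the recursively defined polynomial maps `p̃_ℓ` recover the homogeneous
parts of any biholomorphic solution tangent to the identity of `A ∘ u = b`.  Here `A` has
lowest-order homogeneous terms `A₀` all of degree `ℓ₀+1` with `det A₀′ ≢ 0`, and the
`B ℓ` are left inverses to multiplication by `A₀′` on tuples of homogeneous polynomials. -/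
theorem stmt17 (n ℓ0 : ℕ) (A : Fin n → MvPowerSeries (Fin n) ℂ)
    (hconvA : ∀ i, IsConvPS (A i))
    (hlow : ∀ i, ∀ m, m ≤ ℓ0 → homComp m (A i) = 0)
    (A0 : Fin n → MvPolynomial (Fin n) ℂ)
    (hA0 : ∀ i, A0 i = homComp (ℓ0 + 1) (A i))
    (hA0rank : Matrix.det (Matrix.of fun i j => MvPolynomial.pderiv j (A0 i)) ≠ 0)
    (B : ℕ → ((Fin n → MvPolynomial (Fin n) ℂ) →ₗ[ℂ] (Fin n → MvPolynomial (Fin n) ℂ)))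
    (hB : ∀ ℓ, ∀ P : Fin n → MvPolynomial (Fin n) ℂ, (∀ ν, (P ν).IsHomogeneous ℓ) →
      B ℓ (fun i => ∑ j, MvPolynomial.pderiv j (A0 i) * P j) = P)
    (pt : ℕ → (Fin n → MvPowerSeries (Fin n) ℂ) → (Fin n → MvPolynomial (Fin n) ℂ))
    (hpt1 : ∀ b, pt 1 b = fun ν => MvPolynomial.X ν)
    (hptrec : ∀ b : Fin n → MvPowerSeries (Fin n) ℂ, ∀ ℓ, 2 ≤ ℓ →
      pt ℓ b = B ℓ (fun i =>
        homComp (ℓ0 + ℓ) (b i) -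
          homComp (ℓ0 + ℓ)
            (psComp (A i) (fun ν => polyPS (∑ kk ∈ Finset.Icc 1 (ℓ - 1), pt kk b ν))))) :
    ∀ (b u : Fin n → MvPowerSeries (Fin n) ℂ),
      (∀ i, IsConvPS (b i)) → (∀ i, IsConvPS (u i)) →
      (∀ i, MvPowerSeries.constantCoeff (σ := Fin n) (R := ℂ) (u i) = 0) →
      -- u is tangent to the identity
      (∀ i j, MvPowerSeries.coeff (R := ℂ) (Finsupp.single j 1) (u i) = if i = j then 1 else 0) →
      (∀ i, psComp (A i) u = b i) →
      ∀ ℓ, 1 ≤ ℓ → ∀ ν, homComp ℓ (u ν) = pt ℓ b ν := by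

  classical
  intro b u _hconvb _hconvu hu0 hutan hsol ℓ
  induction ℓ using Nat.strong_induction_on with
  | _ ℓ IH =>
  intro hℓ ν
  rcases eq_or_lt_of_le hℓ with h1 | h2
  · -- base case ℓ = 1
    have h1' : ℓ = 1 := h1.symm
    subst h1'
    rw [hpt1]
    apply MvPolynomial.ext
    intro c
    rw [coeff_homComp]
    by_cases hdc : dgF c = 1
    · obtain ⟨j, rfl⟩ := exists_single_of_dgF_one hdc
      rw [if_pos hdc, hutan ν j, MvPolynomial.coeff_X']
      by_cases hj : ν = j
      · subst hj; simp
      · rw [if_neg hj, if_neg (fun h => hj ((Finsupp.single_left_inj one_ne_zero).mp h))]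
    · rw [if_neg hdc, MvPolynomial.coeff_X', if_neg]
      intro h
      apply hdc
      rw [← h, dgF_single]
  · -- inductive step, 2 ≤ ℓ
    have hl2 : 2 ≤ ℓ := h2
    set g : Fin n → MvPowerSeries (Fin n) ℂ :=
      fun νv => polyPS (∑ kk ∈ Finset.Icc 1 (ℓ - 1), homComp kk (u νv)) with hgdef
    have hcoeffu0 : ∀ j, MvPowerSeries.coeff (R := ℂ) (0 : Fin n →₀ ℕ) (u j) = 0 := by
      intro j
      rw [MvPowerSeries.coeff_zero_eq_constantCoeff_apply]
      exact hu0 j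
    have hgco : ∀ j a, MvPowerSeries.coeff (R := ℂ) a (g j)
        = if 1 ≤ dgF a ∧ dgF a ≤ ℓ - 1 then MvPowerSeries.coeff (R := ℂ) a (u j) else 0 := by
      intro j a
      show MvPowerSeries.coeff (R := ℂ) a
          (polyPS (∑ kk ∈ Finset.Icc 1 (ℓ - 1), homComp kk (u j))) = _
      have hsplit : polyPS (∑ kk ∈ Finset.Icc 1 (ℓ - 1), homComp kk (u j))
          = ∑ kk ∈ Finset.Icc 1 (ℓ - 1), polyPS (homComp kk (u j)) := by
        unfold polyPS; rw [map_sum]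
      rw [hsplit, map_sum]
      have hterm : ∀ kk ∈ Finset.Icc 1 (ℓ - 1),
          MvPowerSeries.coeff (R := ℂ) a (polyPS (homComp kk (u j)))
            = if dgF a = kk then MvPowerSeries.coeff (R := ℂ) a (u j) else 0 := by
        intro kk _
        rw [polyPS_coeff, coeff_homComp]
      rw [Finset.sum_congr rfl hterm, Finset.sum_ite_eq]
      simp [Finset.mem_Icc]
    have hu1 : ∀ j, OO 1 (u j) := by
      intro j a ha
      have h0 : dgF a = 0 := by omega
      rw [dgF_eq_zero h0]
      exact hcoeffu0 j
    have hg1 : ∀ j, OO 1 (g j) := by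
      intro j a ha
      rw [hgco, if_neg (by omega)]
    have hrO : ∀ j, OO ℓ (u j - g j) := by
      intro j a ha
      rw [map_sub, hgco]
      rcases Nat.eq_zero_or_pos (dgF a) with h0 | hpos
      · rw [if_neg (by omega), sub_zero, dgF_eq_zero h0]
        exact hcoeffu0 j
      · rw [if_pos (by omega), sub_self]
    have hgX : ∀ j, DD 2 (g j) (MvPowerSeries.X j) := by
      intro j a ha
      rw [map_sub, hgco, MvPowerSeries.coeff_X]
      rcases Nat.eq_zero_or_pos (dgF a) with h0 | hpos
      · rw [if_neg (by omega), if_neg, sub_zero]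
        intro h
        rw [h, dgF_single] at h0
        omega
      · have hd1 : dgF a = 1 := by omega
        rw [if_pos (by omega)]
        obtain ⟨j', rfl⟩ := exists_single_of_dgF_one hd1
        rw [hutan j j']
        by_cases hjj : j = j'
        · subst hjj; simp
        · rw [if_neg hjj, if_neg (fun h => hjj
            ((Finsupp.single_left_inj one_ne_zero).mp h).symm), sub_zero]
    have hULH : ∀ j, HH ℓ (polyPS (homComp ℓ (u j))) := by
      intro j a ha
      rw [polyPS_coeff, coeff_homComp, if_neg ha]
    have hrU : ∀ j, DD (ℓ + 1) (u j - g j) (polyPS (homComp ℓ (u j))) := by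
      intro j a ha
      rw [map_sub, map_sub, hgco, polyPS_coeff, coeff_homComp]
      rcases Nat.eq_zero_or_pos (dgF a) with h0 | hpos
      · rw [if_neg (by omega), if_neg (by omega), sub_zero, sub_zero, dgF_eq_zero h0]
        exact hcoeffu0 j
      · rcases Nat.lt_or_ge (dgF a) ℓ with hlt | hge
        · rw [if_pos (by omega), if_neg (by omega), sub_self, sub_zero]
        · have : dgF a = ℓ := by omega
          rw [if_neg (by omega), if_pos this, sub_zero, sub_self]
    have E : ∀ i, homComp (ℓ0 + ℓ) (psComp (A i) u) - homComp (ℓ0 + ℓ) (psComp (A i) g)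
        = ∑ j, MvPolynomial.pderiv j (A0 i) * homComp ℓ (u j) := by
      intro i
      apply MvPolynomial.ext
      intro c
      rw [MvPolynomial.coeff_sub, coeff_homComp, coeff_homComp,
        show MvPolynomial.coeff c (∑ j, MvPolynomial.pderiv j (A0 i) * homComp ℓ (u j))
          = MvPowerSeries.coeff (R := ℂ) c
              (polyPS (∑ j, MvPolynomial.pderiv j (A0 i) * homComp ℓ (u j)))
          from (polyPS_coeff _ _).symm]
      by_cases hdc : dgF c = ℓ0 + ℓ
      · rw [if_pos hdc, if_pos hdc, coeff_psComp, coeff_psComp, hdc]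
        have hKP : ∀ d ∈ Finset.range (ℓ0 + ℓ + 1),
            MvPowerSeries.coeff (R := ℂ) c (MvPolynomial.aeval u (homComp d (A i)))
              = MvPowerSeries.coeff (R := ℂ) c (MvPolynomial.aeval g (homComp d (A i)))
                + MvPowerSeries.coeff (R := ℂ) c (polyPS (∑ j, MvPolynomial.pderiv j
                    (homComp d (A i)) * homComp ℓ (u j))) := by
          intro d _
          apply keyPoly hl2 u g _ hu1 hg1 hrO hgX hULH hrU _ _ hdc
          intro m hm
          rcases le_or_gt d ℓ0 with hdl | hdl
          · rw [hlow i d hdl] at hm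
            simp at hm
          · rw [MvPolynomial.mem_support_iff, coeff_homComp] at hm
            by_cases hdm : dgF m = d
            · omega
            · rw [if_neg hdm] at hm; exact absurd rfl hm
        rw [Finset.sum_congr rfl hKP, Finset.sum_add_distrib, add_sub_cancel_left]
        rw [Finset.sum_eq_single (ℓ0 + 1)]
        · rw [hA0 i]
        · intro d _ hdne
          rcases le_or_gt d ℓ0 with hdl | hdl
          · rw [hlow i d hdl]
            simp [polyPS]
          · apply vanishPoly _ hULH
            intro m hm
            rw [MvPolynomial.mem_support_iff, coeff_homComp] at hm
            by_cases hdm : dgF m = d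
            · constructor <;> omega
            · rw [if_neg hdm] at hm; exact absurd rfl hm
        · intro habs
          exact absurd (Finset.mem_range.mpr (by omega)) habs
      · rw [if_neg hdc, if_neg hdc]
        rw [show MvPowerSeries.coeff (R := ℂ) c
            (polyPS (∑ j, MvPolynomial.pderiv j (A0 i) * homComp ℓ (u j))) = 0 from ?_]
        · ring
        · apply vanishPoly _ hULH
          intro m hm
          rw [MvPolynomial.mem_support_iff, hA0 i, coeff_homComp] at hm
          by_cases hdm : dgF m = ℓ0 + 1
          · constructor <;> omega
          · rw [if_neg hdm] at hm; exact absurd rfl hm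
    rw [hptrec b ℓ hl2]
    have hPeq : (fun νv => polyPS (∑ kk ∈ Finset.Icc 1 (ℓ - 1), pt kk b νv)) = g := by
      funext νv
      show polyPS (∑ kk ∈ Finset.Icc 1 (ℓ - 1), pt kk b νv)
        = polyPS (∑ kk ∈ Finset.Icc 1 (ℓ - 1), homComp kk (u νv))
      have hsum : (∑ kk ∈ Finset.Icc 1 (ℓ - 1), pt kk b νv)
          = ∑ kk ∈ Finset.Icc 1 (ℓ - 1), homComp kk (u νv) :=
        Finset.sum_congr rfl (fun kk hkk => by
          rw [Finset.mem_Icc] at hkk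
          exact (IH kk (by omega) (by omega) νv).symm)
      rw [hsum]
    rw [hPeq]
    have harg : (fun i => homComp (ℓ0 + ℓ) (b i) - homComp (ℓ0 + ℓ) (psComp (A i) g))
        = (fun i => ∑ j, MvPolynomial.pderiv j (A0 i) * homComp ℓ (u j)) := by
      funext i
      rw [← hsol i]
      exact E i
    rw [harg, hB ℓ (fun j => homComp ℓ (u j)) (fun j => homComp_isHomogeneous ℓ (u j))]
end
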